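/- Let ε > 0, and let N ≥ 1 and 0 ≤ n₁ ≤ N be integers. With X = Bino(n₁, 1/2) + Bino(N − n₁, 1/(1+e^ε)) (independent binomials) and the estimator Ẑ = (X/N − 1/(e^ε + 1)) / (1/2 − 1/(e^ε + 1)), the variance of Ẑ equals (n₁/4 + (N − n₁)·e^ε/(1 + e^ε)²) · 4(e^ε + 1)² / (N²·(e^ε − 1)²). In particular, when n₁ = 0 the variance equals 4e^ε/(N·(e^ε − 1)²). -/

import Mathlib

open MeasureTheory ProbabilityTheory

section Aux

variable {Ω : Type*} [MeasureSpace Ω] [IsProbabilityMeasure (ℙ : Measure Ω)]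

lemma oue_bernoulli_memℒp {f : Ω → ℝ} (hm : Measurable f)
    (h01 : ∀ ω, f ω = 0 ∨ f ω = 1) : MemLp f 2 ℙ := by
  refine MemLp.of_bound hm.aestronglyMeasurable 1 ?_
  filter_upwards with ω
  rcases h01 ω with h | h <;> simp [h]

lemma oue_bernoulli_integral {f : Ω → ℝ} (hm : Measurable f)
    (h01 : ∀ ω, f ω = 0 ∨ f ω = 1) :
    ∫ ω, f ω ∂ℙ = (ℙ {ω | f ω = 1}).toReal := by
  have hset : MeasurableSet {ω | f ω = 1} := hm (measurableSet_singleton 1)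
  have hf : f = Set.indicator {ω | f ω = 1} (fun _ => (1 : ℝ)) := by
    funext ω
    by_cases h : f ω = 1
    · rw [Set.indicator_of_mem (by exact h) _, h]
    · have h0 : f ω = 0 := (h01 ω).resolve_right h
      rw [Set.indicator_of_notMem (by exact h) _, h0]
  conv_lhs => rw [hf]
  rw [integral_indicator_const _ hset, smul_eq_mul, mul_one, measureReal_def]

lemma oue_bernoulli_variance {f : Ω → ℝ} (hm : Measurable f)
    (h01 : ∀ ω, f ω = 0 ∨ f ω = 1) :
    variance f ℙ = (ℙ {ω | f ω = 1}).toReal * (1 - (ℙ {ω | f ω = 1}).toReal) := by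
  rw [variance_eq_sub (oue_bernoulli_memℒp hm h01)]
  have hsq : (f ^ 2 : Ω → ℝ) = f := by
    funext ω; rcases h01 ω with h | h <;> simp [h]
  rw [hsq]
  have : (∫ ω, f ω ∂ℙ) = (ℙ {ω | f ω = 1}).toReal := oue_bernoulli_integral hm h01
  rw [this]
  ring

lemma oue_variance_add_const {f : Ω → ℝ} (hf : Integrable f ℙ) (c : ℝ) :
    variance (fun ω => f ω + c) ℙ = variance f ℙ := by
  have h : ∫ ω, (f ω + c) ∂ℙ = (∫ ω, f ω ∂ℙ) + c := by
    rw [integral_add hf (integrable_const c), integral_const]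
    simp
  rw [variance, variance, evariance, evariance, h]
  refine congrArg _ (lintegral_congr fun ω => ?_)
  congr 1
  ring_nf

end Aux

/-- Variance of the Optimized Unary Encoding estimator: with `X` the sum of `N`
independent 0/1 reports (`n₁` true ones reported with probability `1/2`, the other
`N − n₁` with probability `1/(1+e^ε)`), the estimator
`Ẑ = (X/N − 1/(e^ε+1))/(1/2 − 1/(e^ε+1))` has variance
`(n₁/4 + (N−n₁)·e^ε/(1+e^ε)²)·4(e^ε+1)²/(N²(e^ε−1)²)`; in particular for `n₁ = 0`
it equals `4e^ε/(N(e^ε−1)²)`. -/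
theorem oue_variance {Ω : Type*} [MeasureSpace Ω]
    [IsProbabilityMeasure (ℙ : Measure Ω)]
    (ε : ℝ) (hε : 0 < ε) (N n₁ : ℕ) (hN : 1 ≤ N) (hn : n₁ ≤ N)
    (X : Fin N → Ω → ℝ) (hmeas : ∀ i, Measurable (X i))
    (h01 : ∀ i ω, X i ω = 0 ∨ X i ω = 1)
    (hindep : iIndepFun X ℙ)
    (hp1 : ∀ i : Fin N, (i : ℕ) < n₁ → ℙ {ω | X i ω = 1} = ENNReal.ofReal (1 / 2))
    (hp2 : ∀ i : Fin N, n₁ ≤ (i : ℕ) →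
      ℙ {ω | X i ω = 1} = ENNReal.ofReal (1 / (1 + Real.exp ε))) :
    variance (fun ω => ((∑ i, X i ω) / N - 1 / (Real.exp ε + 1)) /
        (1 / 2 - 1 / (Real.exp ε + 1))) ℙ =
      ((n₁ : ℝ) / 4 + ((N : ℝ) - n₁) * Real.exp ε / (1 + Real.exp ε) ^ 2) *
        (4 * (Real.exp ε + 1) ^ 2) / ((N : ℝ) ^ 2 * (Real.exp ε - 1) ^ 2) ∧
    (n₁ = 0 →
      variance (fun ω => ((∑ i, X i ω) / N - 1 / (Real.exp ε + 1)) /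
          (1 / 2 - 1 / (Real.exp ε + 1))) ℙ =
        4 * Real.exp ε / ((N : ℝ) * (Real.exp ε - 1) ^ 2)) := by
  set e := Real.exp ε with he
  have he1 : 1 < e := by
    rw [he, ← Real.exp_zero]; exact Real.exp_lt_exp.mpr hε
  have he0 : (0:ℝ) < e := lt_trans one_pos he1
  have hNR : (0:ℝ) < N := by exact_mod_cast hN
  have hdpos : (0:ℝ) < 1/2 - 1/(e+1) := by
    have h2 : (1:ℝ)/(e+1) < 1/2 := (div_lt_div_iff₀ (by linarith) (by norm_num)).mpr (by linarith)
    linarith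
  have hd : (1/2 - 1/(e+1)) ≠ 0 := ne_of_gt hdpos
  have hmem : ∀ i : Fin N, MemLp (X i) 2 ℙ :=
    fun i => oue_bernoulli_memℒp (hmeas i) (h01 i)
  -- variance of each coordinate
  have hvar : ∀ i : Fin N, variance (X i) ℙ =
      if (i : ℕ) < n₁ then 1/4 else e / (1 + e)^2 := by
    intro i
    rw [oue_bernoulli_variance (hmeas i) (h01 i)]
    by_cases h : (i : ℕ) < n₁
    · rw [hp1 i h, if_pos h, ENNReal.toReal_ofReal (by norm_num)]
      norm_num
    · rw [hp2 i (le_of_not_gt h), if_neg h,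
        ENNReal.toReal_ofReal (by positivity)]
      have h1 : (1:ℝ) - 1/(1+e) = e/(1+e) := by
        rw [eq_div_iff (by positivity)]
        field_simp
        ring
      rw [h1, div_mul_div_comm, one_mul, sq]
  -- variance of the sum
  have hpair : Set.Pairwise (↑(Finset.univ : Finset (Fin N)))
      fun i j => IndepFun (X i) (X j) ℙ := fun i _ j _ hij => hindep.indepFun hij
  have hsumvar : variance (∑ i, X i) ℙ =
      (n₁ : ℝ) / 4 + ((N : ℝ) - n₁) * (e / (1 + e)^2) := by
    rw [IndepFun.variance_sum (fun i _ => hmem i) hpair]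
    simp only [hvar]
    rw [Fin.sum_univ_eq_sum_range (fun i => if i < n₁ then (1:ℝ)/4 else e / (1+e)^2)]
    rw [Finset.sum_ite]
    have h1 : Finset.filter (fun i => i < n₁) (Finset.range N) = Finset.range n₁ := by
      ext i; simp only [Finset.mem_filter, Finset.mem_range]; omega
    have h2 : Finset.filter (fun i => ¬ i < n₁) (Finset.range N) = Finset.Ico n₁ N := by
      ext i; simp only [Finset.mem_filter, Finset.mem_range, Finset.mem_Ico]; omega
    rw [h1, h2, Finset.sum_const, Finset.sum_const, Finset.card_range, Nat.card_Ico,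
      nsmul_eq_mul, nsmul_eq_mul, Nat.cast_sub hn]
    ring
  -- rewrite the estimator as an affine function of the sum
  set S : Ω → ℝ := fun ω => ∑ i, X i ω with hS
  have hSeq : S = ∑ i, X i := by funext ω; simp [hS]
  have hSint : Integrable S ℙ := by
    rw [hSeq]
    exact integrable_finset_sum' _ (fun i _ => (hmem i).integrable one_le_two)
  have haff : (fun ω => ((∑ i, X i ω) / N - 1 / (e + 1)) / (1/2 - 1/(e+1))) =
      fun ω => (fun ω => (1 / ((N : ℝ) * (1/2 - 1/(e+1)))) * S ω) ω +
        (-(1/(e+1)) / (1/2 - 1/(e+1))) := by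
    funext ω
    simp only [hS]
    rw [sub_div, div_div, neg_div]
    ring
  rw [haff, oue_variance_add_const (hSint.const_mul _) _, variance_const_mul, hSeq, hsumvar]
  have hNe : (N : ℝ) ≠ 0 := ne_of_gt hNR
  have h1e : (1 + e) ≠ 0 := by positivity
  have he1' : e - 1 ≠ 0 := by intro h; nlinarith
  have he1'' : e + 1 ≠ 0 := by positivity
  have hcoef : (1/((N:ℝ)*(1/2-1/(e+1))))^2 = 4*(e+1)^2/((N:ℝ)^2*(e-1)^2) := by
    rw [div_pow, one_pow, mul_pow, div_eq_div_iff (by positivity) (by positivity)]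
    field_simp
    ring
  rw [hcoef]
  constructor
  · rw [div_mul_eq_mul_div, mul_comm, ← mul_div_assoc]
  · intro h0
    subst h0
    simp only [Nat.cast_zero, zero_div, zero_add, sub_zero]
    field_simp
    ring
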